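/- arXiv:2203.04002 — 5 statements merged into one kernel-verified Lean document; each statement's English description precedes it below -/
import Mathlib

section
/- A vector v ∈ ℝ^d admits a (C₂, C_∞) short-flat decomposition (i.e., v = p + e with ‖p‖₂ ≤ C₂ and ‖e‖_∞ ≤ C_∞) if and only if ‖trunc(v, C_∞)‖₂ ≤ C₂, where trunc(v, c) is the soft-thresholding operator defined coordinatewise by [trunc(v,c)]_i = sgn(v_i)·max(|v_i| − c, 0). -/
open Classical Finset

/-- Soft-thresholding operator: `[trunc(v,c)]ᵢ = sgn(vᵢ)·max(|vᵢ| − c, 0)`. -/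
noncomputable def trunc {d : ℕ} (v : Fin d → ℝ) (c : ℝ) : Fin d → ℝ :=
  fun i => Real.sign (v i) * max (|v i| - c) 0

lemma trunc_abs_le {d : ℕ} (v : Fin d → ℝ) (c : ℝ) (i : Fin d) :
    |trunc v c i| ≤ max (|v i| - c) 0 := by
  unfold trunc
  rw [abs_mul]
  calc |Real.sign (v i)| * |max (|v i| - c) 0| ≤ 1 * |max (|v i| - c) 0| := by
        apply mul_le_mul_of_nonneg_right _ (abs_nonneg _)
        rcases Real.sign_apply_eq (v i) with h | h | h <;> simp [h]
    _ = max (|v i| - c) 0 := by rw [one_mul, abs_of_nonneg (le_max_right _ _)]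

lemma sub_trunc_abs_le {d : ℕ} (v : Fin d → ℝ) (c : ℝ) (hc : 0 ≤ c) (i : Fin d) :
    |v i - trunc v c i| ≤ c := by
  unfold trunc
  rcases le_or_gt (|v i|) c with h | h
  · rw [max_eq_right (by linarith), mul_zero, sub_zero]; exact h
  · have hv : v i ≠ 0 := by
      intro h0; rw [h0] at h; simp at h; linarith
    have hs : Real.sign (v i) * |v i| = v i := by
      rcases lt_or_gt_of_ne hv with hlt | hgt
      · rw [Real.sign_of_neg hlt, abs_of_neg hlt]; ring
      · rw [Real.sign_of_pos hgt, abs_of_pos hgt]; ring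
    rw [max_eq_left (by linarith)]
    have : v i - Real.sign (v i) * (|v i| - c) = Real.sign (v i) * c := by
      rw [mul_sub]; rw [hs]; ring
    rw [this, abs_mul]
    rcases lt_or_gt_of_ne hv with hlt | hgt
    · rw [Real.sign_of_neg hlt]; simp [abs_of_nonneg hc]
    · rw [Real.sign_of_pos hgt]; simp [abs_of_nonneg hc]

/-- `v` has a `(C₂, C∞)` short-flat decomposition iff `‖trunc(v, C∞)‖₂ ≤ C₂`. -/
theorem short_flat_iff_trunc {d : ℕ} (v : Fin d → ℝ) (C2 Cinf : ℝ) (hCinf : 0 ≤ Cinf) :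
    (∃ p e : Fin d → ℝ, v = p + e ∧ Real.sqrt (∑ i, p i ^ 2) ≤ C2 ∧ ∀ i, |e i| ≤ Cinf) ↔
      Real.sqrt (∑ i, trunc v Cinf i ^ 2) ≤ C2 := by
  constructor
  · rintro ⟨p, e, hv, hp, he⟩
    refine le_trans (Real.sqrt_le_sqrt ?_) hp
    apply Finset.sum_le_sum
    intro i _
    rw [← sq_abs (trunc v Cinf i), ← sq_abs (p i)]
    apply pow_le_pow_left₀ (abs_nonneg _)
    refine le_trans (trunc_abs_le v Cinf i) ?_
    rw [max_le_iff]
    refine ⟨?_, abs_nonneg _⟩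
    have : |v i| ≤ |p i| + |e i| := by rw [hv]; exact abs_add_le _ _
    have := he i
    linarith
  · intro h
    refine ⟨trunc v Cinf, fun i => v i - trunc v Cinf i, ?_, h, fun i => sub_trunc_abs_le v Cinf hCinf i⟩
    funext i; simp
end

section
/- Let A ∈ ℝ^{n×d} satisfy the (s, c)-restricted isometry property, i.e., for every s-sparse vector w ∈ ℝ^d, (1/c)‖w‖₂² ≤ ‖Aw‖₂² ≤ c‖w‖₂². Then, for any u ∈ ℝ^n, the ℓ₂ norm of the s largest entries (in absolute value) of Aᵀu is at most c‖u‖₂. -/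
open Classical Finset

/-- If `A` is `(s, c)`-RIP, then for any `u ∈ ℝⁿ`, the ℓ₂ norm of the `s` largest
entries (in absolute value) of `Aᵀu` is at most `c‖u‖₂`; equivalently, the ℓ₂ norm
of `Aᵀu` restricted to any `s` coordinates is at most `c‖u‖₂`. -/
theorem rip_transpose_topk_bound {n d s : ℕ} (c : ℝ) (hc : 0 < c)
    (A : Matrix (Fin n) (Fin d) ℝ)
    (hRIP : ∀ w : Fin d → ℝ, (Finset.univ.filter fun j => w j ≠ 0).card ≤ s →
      (1 / c) * ∑ j, w j ^ 2 ≤ ∑ i, (A.mulVec w i) ^ 2 ∧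
      ∑ i, (A.mulVec w i) ^ 2 ≤ c * ∑ j, w j ^ 2)
    (u : Fin n → ℝ) :
    ∀ S : Finset (Fin d), S.card ≤ s →
      Real.sqrt (∑ j ∈ S, (A.transpose.mulVec u j) ^ 2) ≤ c * Real.sqrt (∑ i, u i ^ 2) := by
  intro S hS
  set v : Fin d → ℝ := A.transpose.mulVec u with hv
  set w : Fin d → ℝ := fun j => if j ∈ S then v j else 0 with hw
  set T : ℝ := ∑ j ∈ S, v j ^ 2 with hT
  set U : ℝ := ∑ i, u i ^ 2 with hU
  have hTnn : 0 ≤ T := Finset.sum_nonneg fun j _ => sq_nonneg _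
  have hUnn : 0 ≤ U := Finset.sum_nonneg fun i _ => sq_nonneg _
  rcases eq_or_lt_of_le hTnn with h0 | hTpos
  · rw [← h0, Real.sqrt_zero]
    positivity
  -- support of w
  have hsupp : (Finset.univ.filter fun j => w j ≠ 0).card ≤ s := by
    refine le_trans (Finset.card_le_card ?_) hS
    intro j hj
    simp only [Finset.mem_filter, hw] at hj
    by_contra hjS
    exact hj.2 (by simp [hjS])
  have hwsq : ∑ j, w j ^ 2 = T := by
    rw [hT, ← Finset.sum_filter_add_sum_filter_not Finset.univ (fun j => j ∈ S)
      (fun j => w j ^ 2)]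
    have h1 : ∑ j ∈ Finset.univ.filter (fun j => j ∈ S), w j ^ 2 = ∑ j ∈ S, v j ^ 2 := by
      rw [Finset.filter_mem_eq_inter, Finset.univ_inter]
      exact Finset.sum_congr rfl fun j hj => by simp [hw, hj]
    have h2 : ∑ j ∈ Finset.univ.filter (fun j => ¬ j ∈ S), w j ^ 2 = 0 := by
      apply Finset.sum_eq_zero
      intro j hj
      simp only [Finset.mem_filter] at hj
      simp [hw, hj.2]
    rw [h1, h2, add_zero]
  obtain ⟨hlow, hhigh⟩ := hRIP w hsupp
  rw [hwsq] at hhigh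
  -- c ≥ 1
  have hSne : S.Nonempty := by
    by_contra h
    rw [Finset.not_nonempty_iff_eq_empty] at h
    simp [hT, h] at hTpos
  obtain ⟨j₀, hj₀⟩ := hSne
  have hc1 : 1 ≤ c := by
    set e : Fin d → ℝ := fun j => if j = j₀ then 1 else 0 with he
    have hesupp : (Finset.univ.filter fun j => e j ≠ 0).card ≤ s := by
      refine le_trans ?_ (le_trans (Finset.card_le_card (Finset.singleton_subset_iff.2 hj₀)) hS)
      apply Finset.card_le_card
      intro j hj
      simp only [Finset.mem_filter, he] at hj
      simp only [Finset.mem_singleton]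
      by_contra hne
      exact hj.2 (by simp [hne])
    obtain ⟨h1, h2⟩ := hRIP e hesupp
    have hesq : ∑ j, e j ^ 2 = 1 := by
      rw [he]
      rw [Finset.sum_eq_single j₀] <;> simp +contextual
    rw [hesq, mul_one] at h1 h2
    have h3 : 1 / c ≤ c := le_trans h1 h2
    rw [div_le_iff₀ hc] at h3
    nlinarith
  -- inner product identity: ∑ i, (A w) i * u i = T
  have hinner : ∑ i, A.mulVec w i * u i = T := by
    have : ∑ i, A.mulVec w i * u i = ∑ j, w j * v j := by
      simp only [Matrix.mulVec, dotProduct, Matrix.transpose_apply, hv,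
        Finset.sum_mul, Finset.mul_sum]
      rw [Finset.sum_comm]
      congr 1; ext j; congr 1; ext i; ring
    rw [this, hT]
    rw [← Finset.sum_filter_add_sum_filter_not Finset.univ (fun j => j ∈ S)
      (fun j => w j * v j)]
    have h1 : ∑ j ∈ Finset.univ.filter (fun j => j ∈ S), w j * v j = ∑ j ∈ S, v j ^ 2 := by
      rw [Finset.filter_mem_eq_inter, Finset.univ_inter]
      exact Finset.sum_congr rfl fun j hj => by simp [hw, hj, sq]
    have h2 : ∑ j ∈ Finset.univ.filter (fun j => ¬ j ∈ S), w j * v j = 0 := by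
      apply Finset.sum_eq_zero
      intro j hj
      simp only [Finset.mem_filter] at hj
      simp [hw, hj.2]
    rw [h1, h2, add_zero]
  -- Cauchy-Schwarz
  have hCS : T ≤ Real.sqrt (∑ i, (A.mulVec w i) ^ 2) * Real.sqrt U := by
    rw [← hinner, hU]
    exact Real.sum_mul_le_sqrt_mul_sqrt _ _ _
  have hsq : Real.sqrt (∑ i, (A.mulVec w i) ^ 2) ≤ Real.sqrt (c * T) :=
    Real.sqrt_le_sqrt hhigh
  have hCS2 : T ≤ Real.sqrt c * Real.sqrt T * Real.sqrt U := by
    calc T ≤ Real.sqrt (∑ i, (A.mulVec w i) ^ 2) * Real.sqrt U :=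
          hCS
      _ ≤ Real.sqrt (c * T) * Real.sqrt U := by
          apply mul_le_mul_of_nonneg_right hsq (Real.sqrt_nonneg _)
      _ = Real.sqrt c * Real.sqrt T * Real.sqrt U := by
          rw [Real.sqrt_mul hc.le]
  have hTs : T = Real.sqrt T * Real.sqrt T := (Real.mul_self_sqrt hTnn).symm
  have hsTpos : 0 < Real.sqrt T := Real.sqrt_pos.2 hTpos
  have hfinal : Real.sqrt T ≤ Real.sqrt c * Real.sqrt U := by
    have hmul : Real.sqrt T * Real.sqrt T ≤ (Real.sqrt c * Real.sqrt U) * Real.sqrt T := by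
      nlinarith [hCS2, hTs]
    exact le_of_mul_le_mul_right hmul hsTpos
  calc Real.sqrt T ≤ Real.sqrt c * Real.sqrt U := hfinal
    _ ≤ c * Real.sqrt U := by
        apply mul_le_mul_of_nonneg_right _ (Real.sqrt_nonneg _)
        nlinarith [Real.sq_sqrt hc.le, Real.sqrt_nonneg c]
end

section
/- Let w ∈ ℝ^n be a nonnegative weight vector with Σᵢ wᵢ = 1 and max_i wᵢ ≤ 1/m for an integer m ≤ n, and let ξ ∈ ℝ^n. Then Σ_{i∈[n]} wᵢ ξᵢ² ≤ (1/m)·‖ξ‖_{2,(m)}², where ‖ξ‖_{2,(m)} is the ℓ₂ norm of the m largest entries of ξ in absolute value. -/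
open Classical Finset

/-- There exists a subset of cardinality `m` containing the `m` largest values of `a`. -/
lemma exists_top_set {α : Type*} [DecidableEq α] (a : α → ℝ) :
    ∀ (m : ℕ) (s : Finset α), m ≤ s.card →
      ∃ T ⊆ s, T.card = m ∧ ∀ i ∈ T, ∀ j ∈ s \ T, a j ≤ a i := by
  intro m
  induction m with
  | zero => intro s _; exact ⟨∅, empty_subset s, rfl, by simp⟩
  | succ k ih =>
    intro s hs
    have hsne : s.Nonempty := Finset.card_pos.mp (by omega)
    obtain ⟨x, hxs, hxmax⟩ := Finset.exists_max_image s a hsne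
    have hcard : k ≤ (s.erase x).card := by
      rw [Finset.card_erase_of_mem hxs]; omega
    obtain ⟨T', hT's, hT'card, hT'⟩ := ih (s.erase x) hcard
    refine ⟨insert x T', ?_, ?_, ?_⟩
    · exact Finset.insert_subset hxs (hT's.trans (Finset.erase_subset _ _))
    · rw [Finset.card_insert_of_notMem (fun h => (Finset.mem_erase.mp (hT's h)).1 rfl), hT'card]
    · intro i hi j hj
      rcases Finset.mem_insert.mp hi with rfl | hi'
      · exact hxmax j (Finset.mem_sdiff.mp hj).1
      · apply hT' i hi' j
        rw [Finset.mem_sdiff] at hj ⊢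
        refine ⟨Finset.mem_erase.mpr ⟨?_, hj.1⟩, fun h => hj.2 (Finset.mem_insert_of_mem h)⟩
        intro h; exact hj.2 (h ▸ Finset.mem_insert_self x T')

/-- If `w` lies in the simplex with `‖w‖∞ ≤ 1/m`, then `∑ᵢ wᵢξᵢ² ≤ (1/m)‖ξ‖_{2,(m)}²`,
where `‖ξ‖_{2,(m)}²` is the largest possible sum of `m` squared entries of `ξ`. -/
theorem weighted_noise_bound {n m : ℕ} (hm : 0 < m) (hmn : m ≤ n) (w ξ : Fin n → ℝ)
    (hw0 : ∀ i, 0 ≤ w i) (hw1 : ∑ i, w i = 1) (hwinf : ∀ i, w i ≤ 1 / (m : ℝ)) :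
    ∑ i, w i * ξ i ^ 2 ≤ (1 / (m : ℝ)) *
      sSup { r : ℝ | ∃ S : Finset (Fin n), S.card = m ∧ r = ∑ i ∈ S, ξ i ^ 2 } := by
  set a : Fin n → ℝ := fun i => ξ i ^ 2 with ha
  obtain ⟨S, hSsub, hScard, hStop⟩ :=
    exists_top_set a m (Finset.univ : Finset (Fin n)) (by simpa using hmn)
  have hSne : S.Nonempty := Finset.card_pos.mp (hScard ▸ hm)
  set t : ℝ := S.inf' hSne a with ht
  have hmpos : (0:ℝ) < m := Nat.cast_pos.mpr hm
  -- step 1 : weighted sum ≤ (1/m) * ∑_{i∈S} a i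
  have key : ∑ i, w i * a i ≤ (1 / (m:ℝ)) * ∑ i ∈ S, a i := by
    have hsplit : ∑ i, w i * a i = ∑ i, w i * (a i - t) + t := by
      have : ∑ i, w i * (a i - t) = ∑ i, w i * a i - (∑ i, w i) * t := by
        rw [Finset.sum_mul]; rw [← Finset.sum_sub_distrib]; ring_nf
        exact Finset.sum_congr rfl (fun _ _ => by ring)
      rw [this, hw1]; ring
    have h1 : ∑ i, w i * (a i - t) ≤ ∑ i ∈ S, w i * (a i - t) := by
      rw [← Finset.sum_sdiff (Finset.subset_univ S)]
      have hle : ∑ i ∈ univ \ S, w i * (a i - t) ≤ 0 := by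
        apply Finset.sum_nonpos
        intro j hj
        have hjt : a j ≤ t := Finset.le_inf' hSne a (fun i hi => hStop i hi j hj)
        exact mul_nonpos_of_nonneg_of_nonpos (hw0 j) (by linarith)
      linarith
    have h2 : ∑ i ∈ S, w i * (a i - t) ≤ ∑ i ∈ S, (1 / (m:ℝ)) * (a i - t) := by
      apply Finset.sum_le_sum
      intro i hi
      have hti : t ≤ a i := Finset.inf'_le a hi
      exact mul_le_mul_of_nonneg_right (hwinf i) (by linarith)
    have h3 : ∑ i ∈ S, (1 / (m:ℝ)) * (a i - t) = (1 / (m:ℝ)) * ∑ i ∈ S, a i - t := by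
      rw [← Finset.mul_sum, Finset.sum_sub_distrib, Finset.sum_const, hScard,
        nsmul_eq_mul, mul_sub]
      field_simp
    linarith [hsplit, h1, h2]
  -- step 2 : ∑_{i∈S} a i ≤ sSup ...
  have hfin : ({ r : ℝ | ∃ S : Finset (Fin n), S.card = m ∧ r = ∑ i ∈ S, a i }).Finite := by
    have : { r : ℝ | ∃ S : Finset (Fin n), S.card = m ∧ r = ∑ i ∈ S, a i } ⊆
        (fun T : Finset (Fin n) => ∑ i ∈ T, a i) '' Set.univ := by
      rintro r ⟨T, _, rfl⟩; exact ⟨T, Set.mem_univ _, rfl⟩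
    exact ((Set.finite_univ).image _).subset this
  have hmem : ∑ i ∈ S, a i ∈ { r : ℝ | ∃ S : Finset (Fin n), S.card = m ∧ r = ∑ i ∈ S, a i } :=
    ⟨S, hScard, rfl⟩
  have hsup : ∑ i ∈ S, a i ≤
      sSup { r : ℝ | ∃ S : Finset (Fin n), S.card = m ∧ r = ∑ i ∈ S, a i } :=
    le_csSup (hfin.bddAbove) hmem
  calc ∑ i, w i * a i ≤ (1 / (m:ℝ)) * ∑ i ∈ S, a i := key
    _ ≤ _ := by
        apply mul_le_mul_of_nonneg_left hsup
        positivity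
end

section
/- Let B ∈ ℝ^{n×d} be (s', c)-RIP and let v ∈ ℝ^d satisfy NS(v) ≤ σ. Then ‖Bv‖₂ ≤ c·(1 + √(σ/s'))·‖v‖₂. -/
open Classical Finset

private lemma sqrt_sum_sq_eq_norm {n : ℕ} (g : Fin n → ℝ) :
    Real.sqrt (∑ i, g i ^ 2) = ‖(WithLp.linearEquiv 2 ℝ (Fin n → ℝ)).symm g‖ := by
  rw [EuclideanSpace.norm_eq]
  congr 1
  refine Finset.sum_congr rfl fun i _ => ?_
  rw [Real.norm_eq_abs, sq_abs]
  rfl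

private lemma sqrt_sum_sq_triangle {n : ℕ} {ι : Type*} (s : Finset ι) (f : ι → Fin n → ℝ) :
    Real.sqrt (∑ i, (∑ k ∈ s, f k i) ^ 2) ≤ ∑ k ∈ s, Real.sqrt (∑ i, f k i ^ 2) := by
  have hfun : (fun i => ∑ k ∈ s, f k i) = ∑ k ∈ s, f k := by
    funext i; simp
  calc Real.sqrt (∑ i, (∑ k ∈ s, f k i) ^ 2)
      = ‖(WithLp.linearEquiv 2 ℝ (Fin n → ℝ)).symm (fun i => ∑ k ∈ s, f k i)‖ :=
        sqrt_sum_sq_eq_norm _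
    _ = ‖∑ k ∈ s, (WithLp.linearEquiv 2 ℝ (Fin n → ℝ)).symm (f k)‖ := by
        rw [hfun, map_sum]
    _ ≤ ∑ k ∈ s, ‖(WithLp.linearEquiv 2 ℝ (Fin n → ℝ)).symm (f k)‖ := norm_sum_le _ _
    _ = ∑ k ∈ s, Real.sqrt (∑ i, f k i ^ 2) := by
        exact Finset.sum_congr rfl fun k _ => (sqrt_sum_sq_eq_norm (f k)).symm


private lemma block_lower {s' k m : ℕ} (hs' : 0 < s') (h : m / s' = k) : k * s' ≤ m := by
  have := Nat.div_mul_le_self m s'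
  rwa [h] at this

private lemma block_upper {s' k m : ℕ} (hs' : 0 < s') (h : m / s' = k) : m < k * s' + s' := by
  have h1 : m / s' < k + 1 := h ▸ Nat.lt_succ_self k
  have := (Nat.div_lt_iff_lt_mul hs').mp h1
  calc m < (k + 1) * s' := this
    _ = k * s' + s' := by ring

private lemma block_div_eq {s' k m : ℕ} (hs' : 0 < s') (h1 : k * s' ≤ m)
    (h2 : m < k * s' + s') : m / s' = k := by
  refine Nat.div_eq_of_lt_le h1 ?_
  calc m < k * s' + s' := h2
    _ = (k + 1) * s' := by ring

/-- If `B` is `(s', c)`-RIP and `NS(v) ≤ σ`, then `‖Bv‖₂ ≤ c(1 + √(σ/s'))‖v‖₂`. -/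
theorem rip_numerically_sparse_upper {n d s' : ℕ} (hs' : 0 < s') (c σ : ℝ)
    (hc : 0 < c) (hσ : 0 ≤ σ) (B : Matrix (Fin n) (Fin d) ℝ)
    (hRIP : ∀ w : Fin d → ℝ, (Finset.univ.filter fun j => w j ≠ 0).card ≤ s' →
      (1 / c) * ∑ j, w j ^ 2 ≤ ∑ i, (B.mulVec w i) ^ 2 ∧
      ∑ i, (B.mulVec w i) ^ 2 ≤ c * ∑ j, w j ^ 2)
    (v : Fin d → ℝ) (hNS : (∑ j, |v j|) ^ 2 ≤ σ * ∑ j, v j ^ 2) :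
    Real.sqrt (∑ i, (B.mulVec v i) ^ 2) ≤
      c * (1 + Real.sqrt (σ / s')) * Real.sqrt (∑ j, v j ^ 2) := by
  rcases Nat.eq_zero_or_pos d with hd | hd
  · subst hd
    have h0 : ∀ i, B.mulVec v i = 0 := by
      intro i; simp [Matrix.mulVec, dotProduct]
    simp only [h0]
    have : Real.sqrt (∑ _i : Fin n, (0:ℝ) ^ 2) = 0 := by simp
    rw [this]
    positivity
  -- c ≥ 1
  have hc1 : 1 ≤ c := by
    set j0 : Fin d := ⟨0, hd⟩
    have h := hRIP (fun j => if j = j0 then 1 else 0) ?_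
    · have hsum : (∑ j, (if j = j0 then (1:ℝ) else 0) ^ 2) = 1 := by
        simp [apply_ite (· ^ 2)]
      rw [hsum] at h
      have h2 : 1 / c ≤ c := by
        have := h.1.trans h.2
        linarith
      rw [div_le_iff₀ hc] at h2
      nlinarith [h2, hc]
    · have : (Finset.univ.filter fun j => (if j = j0 then (1:ℝ) else 0) ≠ 0) = {j0} := by
        ext j; by_cases hj : j = j0 <;> simp [hj]
      rw [this, Finset.card_singleton]
      exact hs'
  have hs'R : (0:ℝ) < (s' : ℝ) := by exact_mod_cast hs'
  set π := Tuple.sort (fun j : Fin d => -|v j|) with hπdef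
  have hmono : Monotone ((fun j : Fin d => -|v j|) ∘ π) := Tuple.monotone_sort _
  have hanti : ∀ {i j : Fin d}, i ≤ j → |v (π j)| ≤ |v (π i)| := by
    intro i j hij
    have := hmono hij
    simp only [Function.comp_apply, neg_le_neg_iff] at this
    linarith
  -- blocks
  set w : ℕ → Fin d → ℝ := fun k i => if ((π.symm i : Fin d) : ℕ) / s' = k then v i else 0
    with hwdef
  set F : ℕ → Finset (Fin d) := fun k => Finset.univ.filter fun j => ((j : ℕ) / s' = k)
    with hFdef
  set S : ℕ → ℝ := fun k => ∑ j ∈ F k, |v (π j)| with hSdef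
  set Q : ℕ → ℝ := fun k => ∑ j ∈ F k, (v (π j)) ^ 2 with hQdef
  have hSnonneg : ∀ k, 0 ≤ S k := fun k => Finset.sum_nonneg fun j _ => abs_nonneg _
  have hQnonneg : ∀ k, 0 ≤ Q k := fun k => Finset.sum_nonneg fun j _ => sq_nonneg _
  -- cardinality of blocks
  have hFcard : ∀ k, (F k).card ≤ s' := by
    intro k
    have hle : (F k).card ≤ (Finset.Ico (k * s') (k * s' + s')).card := by
      refine Finset.card_le_card_of_injOn (fun j => (j : ℕ)) ?_ ?_
      · intro j hj
        simp only [hFdef, Finset.mem_coe, Finset.mem_filter, Finset.mem_univ, true_and] at hj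
        rw [Finset.mem_coe, Finset.mem_Ico]
        exact ⟨block_lower hs' hj, block_upper hs' hj⟩
      · intro a _ b _ hab
        exact Fin.val_injective hab
    simpa [Nat.add_sub_cancel_left] using hle
  -- decomposition
  have hvdec : v = ∑ k ∈ Finset.range d, w k := by
    funext i
    rw [Finset.sum_apply]
    simp only [hwdef]
    rw [Finset.sum_ite_eq (Finset.range d) (((π.symm i : Fin d) : ℕ) / s') (fun _ => v i)]
    rw [if_pos]
    rw [Finset.mem_range]
    exact lt_of_le_of_lt (Nat.div_le_self _ _) (π.symm i).isLt
  -- sparsity of blocks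
  have hsparse : ∀ k, (Finset.univ.filter fun j => w k j ≠ 0).card ≤ s' := by
    intro k
    have hsub : (Finset.univ.filter fun j => w k j ≠ 0) ⊆
        Finset.univ.filter fun j => (((π.symm j : Fin d)) : ℕ) / s' = k := by
      intro j hj
      simp only [Finset.mem_filter, Finset.mem_univ, true_and, hwdef] at hj ⊢
      by_contra h
      exact hj (if_neg h)
    have hmid : (Finset.univ.filter fun j => (((π.symm j : Fin d)) : ℕ) / s' = k).card ≤
        (F k).card := by
      refine Finset.card_le_card_of_injOn (fun j => π.symm j) ?_ ?_
      · intro j hj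
        simp only [Finset.mem_coe, Finset.mem_filter, Finset.mem_univ, true_and, hFdef] at hj ⊢
        exact hj
      · intro a _ b _ hab
        exact π.symm.injective hab
    exact le_trans (le_trans (Finset.card_le_card hsub) hmid) (hFcard k)
  -- block sums in sorted coordinates
  have hsum_sq : ∀ k, (∑ i, (w k i) ^ 2) = Q k := by
    intro k
    rw [← Equiv.sum_comp π (fun i => (w k i) ^ 2)]
    simp only [hQdef, hFdef, Finset.sum_filter]
    refine Finset.sum_congr rfl fun j _ => ?_
    simp only [hwdef, Equiv.symm_apply_apply]
    split <;> simp
  -- total L1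
  have hL1 : (∑ k ∈ Finset.range d, S k) = ∑ i, |v i| := by
    simp only [hSdef, hFdef]
    rw [Finset.sum_fiberwise_of_maps_to (fun j _ => by
      rw [Finset.mem_range]
      exact lt_of_le_of_lt (Nat.div_le_self _ _) j.isLt)]
    exact Equiv.sum_comp π (fun i => |v i|)
  -- Q 0 ≤ total
  have hQ0 : Q 0 ≤ ∑ j, v j ^ 2 := by
    rw [← Equiv.sum_comp π (fun i => v i ^ 2)]
    exact Finset.sum_le_sum_of_subset_of_nonneg (Finset.filter_subset _ _)
      (fun j _ _ => sq_nonneg _)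
  -- key shelling bound
  have hQk : ∀ k, 1 ≤ k → Q k ≤ (S (k - 1)) ^ 2 / s' := by
    intro k hk
    rcases Finset.eq_empty_or_nonempty (F k) with hFk | ⟨j0, hj0⟩
    · rw [hQdef]
      simp only [hFk, Finset.sum_empty]
      positivity
    · simp only [hFdef, Finset.mem_filter, Finset.mem_univ, true_and] at hj0
      have hks : k * s' ≤ (j0 : ℕ) := block_lower hs' hj0
      have hk1 : k - 1 + 1 = k := by omega
      have hkk : (k - 1) * s' + s' = k * s' := by
        calc (k - 1) * s' + s' = (k - 1 + 1) * s' := by ring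
          _ = k * s' := by rw [hk1]
      have hlt : ∀ t : ℕ, t < (k - 1) * s' + s' → t < d := by
        intro t ht
        calc t < (k - 1) * s' + s' := ht
          _ = k * s' := hkk
          _ ≤ (j0 : ℕ) := hks
          _ < d := j0.isLt
      -- block k-1 is full: card = s'
      have hfull : (F (k - 1)).card = s' := by
        apply le_antisymm (hFcard _)
        have hcard : (Finset.Ico ((k - 1) * s') ((k - 1) * s' + s')).card ≤ (F (k - 1)).card := by
          refine Finset.card_le_card_of_injOn
            (fun t => if ht : t < d then (⟨t, ht⟩ : Fin d) else ⟨0, hd⟩) ?_ ?_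
          · intro t ht
            rw [Finset.mem_coe, Finset.mem_Ico] at ht
            have htd : t < d := hlt t ht.2
            simp only [dif_pos htd]
            simp only [hFdef, Finset.mem_coe, Finset.mem_filter, Finset.mem_univ, true_and]
            exact block_div_eq hs' ht.1 ht.2
          · intro a ha b hb hab
            simp only [Finset.coe_Ico, Set.mem_Ico] at ha hb
            have had : a < d := hlt a ha.2
            have hbd : b < d := hlt b hb.2
            simp only [dif_pos had, dif_pos hbd] at hab
            exact congrArg Fin.val hab
        simpa [Nat.add_sub_cancel_left] using hcard
      -- pointwise bound
      have hpt : ∀ j ∈ F k, |v (π j)| ≤ S (k - 1) / s' := by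
        intro j hj
        simp only [hFdef, Finset.mem_filter, Finset.mem_univ, true_and] at hj
        rw [le_div_iff₀ hs'R]
        have hbound : ∀ i ∈ F (k - 1), |v (π j)| ≤ |v (π i)| := by
          intro i hi
          simp only [hFdef, Finset.mem_filter, Finset.mem_univ, true_and] at hi
          apply hanti
          have h1 : (i : ℕ) < (k - 1) * s' + s' := block_upper hs' hi
          have h2 : (i : ℕ) < k * s' := hkk ▸ h1
          have h3 : k * s' ≤ (j : ℕ) := block_lower hs' hj
          exact Fin.le_def.mpr (le_of_lt (lt_of_lt_of_le h2 h3))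
        calc |v (π j)| * (s' : ℝ) = ∑ _i ∈ F (k - 1), |v (π j)| := by
              rw [Finset.sum_const, hfull, nsmul_eq_mul, mul_comm]
          _ ≤ ∑ i ∈ F (k - 1), |v (π i)| := Finset.sum_le_sum hbound
          _ = S (k - 1) := rfl
      calc Q k = ∑ j ∈ F k, (v (π j)) ^ 2 := rfl
        _ ≤ ∑ j ∈ F k, (S (k - 1) / s') ^ 2 := by
            apply Finset.sum_le_sum
            intro j hj
            rw [← sq_abs (v (π j))]
            apply pow_le_pow_left₀ (abs_nonneg _) (hpt j hj)
        _ = (F k).card * (S (k - 1) / s') ^ 2 := by rw [Finset.sum_const, nsmul_eq_mul]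
        _ ≤ (s' : ℝ) * (S (k - 1) / s') ^ 2 := by
            apply mul_le_mul_of_nonneg_right _ (sq_nonneg _)
            exact_mod_cast hFcard k
        _ = (S (k - 1)) ^ 2 / s' := by field_simp
  -- sqrt version of shelling bound
  have hQk' : ∀ k, 1 ≤ k → Real.sqrt (Q k) ≤ S (k - 1) / Real.sqrt s' := by
    intro k hk
    calc Real.sqrt (Q k) ≤ Real.sqrt ((S (k - 1)) ^ 2 / s') := Real.sqrt_le_sqrt (hQk k hk)
      _ = S (k - 1) / Real.sqrt s' := by
          rw [Real.sqrt_div (sq_nonneg _), Real.sqrt_sq (hSnonneg _)]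
  -- sum of block sqrt norms
  have hsumQ : (∑ k ∈ Finset.range d, Real.sqrt (Q k)) ≤
      Real.sqrt (∑ j, v j ^ 2) + (∑ i, |v i|) / Real.sqrt s' := by
    rw [Finset.range_eq_Ico, Finset.sum_eq_sum_Ico_succ_bot hd]
    have h0 : Real.sqrt (Q 0) ≤ Real.sqrt (∑ j, v j ^ 2) := Real.sqrt_le_sqrt hQ0
    have htail : (∑ k ∈ Finset.Ico 1 d, Real.sqrt (Q k)) ≤ (∑ i, |v i|) / Real.sqrt s' := by
      calc (∑ k ∈ Finset.Ico 1 d, Real.sqrt (Q k))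
          ≤ ∑ k ∈ Finset.Ico 1 d, S (k - 1) / Real.sqrt s' :=
            Finset.sum_le_sum fun k hk => hQk' k (Finset.mem_Ico.mp hk).1
        _ = (∑ k ∈ Finset.Ico 1 d, S (k - 1)) / Real.sqrt s' := by
            rw [Finset.sum_div]
        _ ≤ (∑ i, |v i|) / Real.sqrt s' := by
            have hnum : (∑ k ∈ Finset.Ico 1 d, S (k - 1)) ≤ ∑ i, |v i| := by
              rw [Finset.sum_Ico_eq_sum_range]
              have hre : (∑ k ∈ Finset.range (d - 1), S (1 + k - 1))
                  = ∑ k ∈ Finset.range (d - 1), S k := by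
                refine Finset.sum_congr rfl fun k _ => ?_
                congr 1
                omega
              rw [hre, ← hL1]
              apply Finset.sum_le_sum_of_subset_of_nonneg
              · exact Finset.range_subset_range.mpr (by omega)
              · intro k _ _
                exact hSnonneg k
            gcongr
    linarith
  -- L1 vs L2
  have hL1L2 : (∑ i, |v i|) ≤ Real.sqrt σ * Real.sqrt (∑ j, v j ^ 2) := by
    have h1 : (∑ i, |v i|) = Real.sqrt ((∑ i, |v i|) ^ 2) :=
      (Real.sqrt_sq (Finset.sum_nonneg fun i _ => abs_nonneg _)).symm
    rw [h1, ← Real.sqrt_mul hσ]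
    exact Real.sqrt_le_sqrt hNS
  -- triangle inequality
  have htri : Real.sqrt (∑ i, (B.mulVec v i) ^ 2) ≤
      ∑ k ∈ Finset.range d, Real.sqrt (∑ i, (B.mulVec (w k) i) ^ 2) := by
    have hmv : ∀ i, B.mulVec v i = ∑ k ∈ Finset.range d, B.mulVec (w k) i := by
      intro i
      rw [hvdec]
      have : B.mulVec (∑ k ∈ Finset.range d, w k) = ∑ k ∈ Finset.range d, B.mulVec (w k) := by
        simpa only [Matrix.mulVecLin_apply] using map_sum B.mulVecLin w (Finset.range d)
      rw [this, Finset.sum_apply]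
    simp only [hmv]
    exact sqrt_sum_sq_triangle (Finset.range d) (fun k => B.mulVec (w k))
  -- RIP upper bound on each block
  have hblock : ∀ k, Real.sqrt (∑ i, (B.mulVec (w k) i) ^ 2) ≤ Real.sqrt c * Real.sqrt (Q k) := by
    intro k
    calc Real.sqrt (∑ i, (B.mulVec (w k) i) ^ 2)
        ≤ Real.sqrt (c * ∑ j, (w k j) ^ 2) := Real.sqrt_le_sqrt (hRIP (w k) (hsparse k)).2
      _ = Real.sqrt c * Real.sqrt (∑ j, (w k j) ^ 2) := Real.sqrt_mul hc.le _
      _ = Real.sqrt c * Real.sqrt (Q k) := by rw [hsum_sq]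
  -- assemble
  have hsqrtc : Real.sqrt c ≤ c := by
    have h1 : 1 ≤ Real.sqrt c := Real.one_le_sqrt.mpr hc1
    nlinarith [Real.sq_sqrt hc.le, h1]
  have hT : (0:ℝ) ≤ Real.sqrt (∑ j, v j ^ 2) := Real.sqrt_nonneg _
  have hdiv : Real.sqrt (σ / s') = Real.sqrt σ / Real.sqrt s' := Real.sqrt_div hσ _
  calc Real.sqrt (∑ i, (B.mulVec v i) ^ 2)
      ≤ ∑ k ∈ Finset.range d, Real.sqrt (∑ i, (B.mulVec (w k) i) ^ 2) := htri
    _ ≤ ∑ k ∈ Finset.range d, Real.sqrt c * Real.sqrt (Q k) :=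
        Finset.sum_le_sum fun k _ => hblock k
    _ = Real.sqrt c * ∑ k ∈ Finset.range d, Real.sqrt (Q k) := by rw [Finset.mul_sum]
    _ ≤ Real.sqrt c * (Real.sqrt (∑ j, v j ^ 2) + (∑ i, |v i|) / Real.sqrt s') := by
        apply mul_le_mul_of_nonneg_left hsumQ (Real.sqrt_nonneg c)
    _ ≤ Real.sqrt c * (Real.sqrt (∑ j, v j ^ 2)
          + (Real.sqrt σ * Real.sqrt (∑ j, v j ^ 2)) / Real.sqrt s') := by
        have := hL1L2
        gcongr
    _ = Real.sqrt c * (1 + Real.sqrt (σ / s')) * Real.sqrt (∑ j, v j ^ 2) := by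
        rw [hdiv]; ring
    _ ≤ c * (1 + Real.sqrt (σ / s')) * Real.sqrt (∑ j, v j ^ 2) := by
        apply mul_le_mul_of_nonneg_right _ hT
        apply mul_le_mul_of_nonneg_right hsqrtc
        have : 0 ≤ Real.sqrt (σ / s') := Real.sqrt_nonneg _
        linarith
end

section
/- Let B ∈ ℝ^{n×d} be (s', c)-RIP and let v ∈ ℝ^d satisfy NS(v) ≤ σ with √(σ/s')·c² ≤ 1/2. Then ‖Bv‖₂ ≥ ((1/c) − c·√(σ/s'))·‖v‖₂, where in particular the right-hand side is at least ‖v‖₂/(2c). -/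
open Classical Finset

set_option maxHeartbeats 2000000 in
/-- Auxiliary: selection of the `m` coordinates with largest absolute values. -/
lemma top_select {d : ℕ} (u : Fin d → ℝ) (m : ℕ) (hm : m ≤ d) :
    ∃ T : Finset (Fin d), T.card = m ∧ ∀ j ∈ T, ∀ k ∉ T, |u k| ≤ |u j| := by
  obtain ⟨T0, -, hT0⟩ := Finset.exists_subset_card_eq (show m ≤ (univ : Finset (Fin d)).card by simpa using hm)
  have hne : (Finset.univ.powersetCard m (α := Fin d) : Finset (Finset (Fin d))).Nonempty := by
    exact ⟨T0, by simp [Finset.mem_powersetCard, hT0]⟩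
  obtain ⟨T, hTmem, hmax⟩ := Finset.exists_max_image _ (fun T => ∑ j ∈ T, |u j|) hne
  rw [Finset.mem_powersetCard] at hTmem
  refine ⟨T, hTmem.2, ?_⟩
  intro j hj k hk
  have hkj : k ∉ T.erase j := fun h => hk (Finset.mem_of_mem_erase h)
  have hcard : (insert k (T.erase j)).card = m := by
    have h1 : 1 ≤ T.card := Finset.card_pos.2 ⟨j, hj⟩
    rw [Finset.card_insert_of_notMem hkj, Finset.card_erase_of_mem hj]
    omega
  have := hmax (insert k (T.erase j)) (by
    rw [Finset.mem_powersetCard]; exact ⟨Finset.subset_univ _, hcard⟩)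
  rw [Finset.sum_insert hkj] at this
  have herase : ∑ x ∈ T.erase j, |u x| + |u j| = ∑ x ∈ T, |u x| :=
    Finset.sum_erase_add _ _ hj
  linarith

set_option maxHeartbeats 2000000 in
/-- Auxiliary: near-orthogonality of images of disjointly supported sparse vectors. -/
lemma rip_cross {n d s' s₂ : ℕ} (h2s : 2 * s₂ ≤ s') (c : ℝ) (hc : 0 < c)
    (B : Matrix (Fin n) (Fin d) ℝ)
    (hRIP : ∀ w : Fin d → ℝ, (Finset.univ.filter fun j => w j ≠ 0).card ≤ s' →
      (1 / c) * ∑ j, w j ^ 2 ≤ ∑ i, (B.mulVec w i) ^ 2 ∧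
      ∑ i, (B.mulVec w i) ^ 2 ≤ c * ∑ j, w j ^ 2)
    (x y : Fin d → ℝ)
    (hx : (Finset.univ.filter fun j => x j ≠ 0).card ≤ s₂)
    (hy : (Finset.univ.filter fun j => y j ≠ 0).card ≤ s₂)
    (hdisj : ∀ j, x j = 0 ∨ y j = 0) :
    |∑ i, B.mulVec x i * B.mulVec y i| ≤
      (c - 1/c)/2 * (Real.sqrt (∑ j, x j ^ 2) * Real.sqrt (∑ j, y j ^ 2)) := by
  by_cases hX0 : ∑ j, x j ^ 2 = 0
  · have hx0 : ∀ j, x j = 0 := by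
      intro j
      have := (Finset.sum_eq_zero_iff_of_nonneg (fun j _ => sq_nonneg (x j))).1 hX0 j (mem_univ j)
      exact pow_eq_zero_iff (n := 2) (by norm_num) |>.1 this
    have hBx : ∀ i, B.mulVec x i = 0 := by
      intro i; simp [Matrix.mulVec, dotProduct, hx0]
    simp [hBx, hX0]
  by_cases hY0 : ∑ j, y j ^ 2 = 0
  · have hy0 : ∀ j, y j = 0 := by
      intro j
      have := (Finset.sum_eq_zero_iff_of_nonneg (fun j _ => sq_nonneg (y j))).1 hY0 j (mem_univ j)
      exact pow_eq_zero_iff (n := 2) (by norm_num) |>.1 this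
    have hBy : ∀ i, B.mulVec y i = 0 := by
      intro i; simp [Matrix.mulVec, dotProduct, hy0]
    simp [hBy, hY0]
  set X := Real.sqrt (∑ j, x j ^ 2) with hXdef
  set Y := Real.sqrt (∑ j, y j ^ 2) with hYdef
  have hXnn : 0 ≤ ∑ j, x j ^ 2 := Finset.sum_nonneg fun j _ => sq_nonneg _
  have hYnn : 0 ≤ ∑ j, y j ^ 2 := Finset.sum_nonneg fun j _ => sq_nonneg _
  have hXpos : 0 < X := Real.sqrt_pos.2 (lt_of_le_of_ne hXnn (Ne.symm hX0))
  have hYpos : 0 < Y := Real.sqrt_pos.2 (lt_of_le_of_ne hYnn (Ne.symm hY0))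
  have hX2 : X ^ 2 = ∑ j, x j ^ 2 := Real.sq_sqrt hXnn
  have hY2 : Y ^ 2 = ∑ j, y j ^ 2 := Real.sq_sqrt hYnn
  -- normalized vectors
  set x' : Fin d → ℝ := fun j => x j / X with hx'def
  set y' : Fin d → ℝ := fun j => y j / Y with hy'def
  have hmvx : ∀ i, B.mulVec x' i = B.mulVec x i / X := by
    intro i
    have : x' = X⁻¹ • x := by funext j; simp [hx'def, div_eq_inv_mul, smul_eq_mul]
    rw [this, Matrix.mulVec_smul]
    simp [div_eq_inv_mul]
  have hmvy : ∀ i, B.mulVec y' i = B.mulVec y i / Y := by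
    intro i
    have : y' = Y⁻¹ • y := by funext j; simp [hy'def, div_eq_inv_mul, smul_eq_mul]
    rw [this, Matrix.mulVec_smul]
    simp [div_eq_inv_mul]
  have hsumx' : ∑ j, x' j ^ 2 = 1 := by
    simp only [hx'def, div_pow]
    rw [← Finset.sum_div, ← hX2]
    field_simp
  have hsumy' : ∑ j, y' j ^ 2 = 1 := by
    simp only [hy'def, div_pow]
    rw [← Finset.sum_div, ← hY2]
    field_simp
  have hcross0 : ∑ j, x' j * y' j = 0 := by
    apply Finset.sum_eq_zero
    intro j _
    rcases hdisj j with h | h <;> simp [hx'def, hy'def, h]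
  -- the two test vectors
  have key : ∀ ε : ℝ, ε = 1 ∨ ε = -1 →
      (1/c) * 2 ≤ ∑ i, (B.mulVec x' i + ε * B.mulVec y' i) ^ 2 ∧
      ∑ i, (B.mulVec x' i + ε * B.mulVec y' i) ^ 2 ≤ c * 2 := by
    intro ε hε
    set w : Fin d → ℝ := fun j => x' j + ε * y' j with hwdef
    have hw : ∀ i, B.mulVec w i = B.mulVec x' i + ε * B.mulVec y' i := by
      intro i
      have : w = x' + ε • y' := by funext j; simp [hwdef, smul_eq_mul]
      rw [this, Matrix.mulVec_add, Matrix.mulVec_smul]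
      simp [smul_eq_mul]
    have hwsum : ∑ j, w j ^ 2 = 2 := by
      have : ∀ j, w j ^ 2 = x' j ^ 2 + ε^2 * (y' j ^2) + 2 * ε * (x' j * y' j) := by
        intro j; simp [hwdef]; ring
      rw [Finset.sum_congr rfl fun j _ => this j]
      rw [Finset.sum_add_distrib, Finset.sum_add_distrib, ← Finset.mul_sum, ← Finset.mul_sum,
        hsumx', hsumy', hcross0]
      rcases hε with h | h <;> rw [h] <;> ring
    have hwsupp : (Finset.univ.filter fun j => w j ≠ 0).card ≤ s' := by
      have hsub : (Finset.univ.filter fun j => w j ≠ 0) ⊆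
          (Finset.univ.filter fun j => x j ≠ 0) ∪ (Finset.univ.filter fun j => y j ≠ 0) := by
        intro j hj
        simp only [Finset.mem_filter, Finset.mem_union, Finset.mem_univ, true_and] at hj ⊢
        by_contra hcon
        push_neg at hcon
        apply hj
        simp [hwdef, hx'def, hy'def, hcon.1, hcon.2]
      calc (Finset.univ.filter fun j => w j ≠ 0).card ≤ _ := Finset.card_le_card hsub
        _ ≤ _ + _ := Finset.card_union_le _ _
        _ ≤ s' := by omega
    have := hRIP w hwsupp
    rw [hwsum] at this
    constructor
    · refine le_trans this.1 (le_of_eq ?_)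
      exact Finset.sum_congr rfl fun i _ => by rw [hw]
    · refine le_trans (le_of_eq ?_) this.2
      exact Finset.sum_congr rfl fun i _ => by rw [hw i]
  have kp := key 1 (Or.inl rfl)
  have km := key (-1) (Or.inr rfl)
  have hdiff : ∑ i, (B.mulVec x' i + 1 * B.mulVec y' i) ^ 2
      - ∑ i, (B.mulVec x' i + (-1) * B.mulVec y' i) ^ 2
      = 4 * ((∑ i, B.mulVec x i * B.mulVec y i) / (X * Y)) := by
    rw [← Finset.sum_sub_distrib, Finset.sum_div, Finset.mul_sum]
    apply Finset.sum_congr rfl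
    intro i _
    rw [hmvx i, hmvy i]
    field_simp
    ring
  have h1 : 4 * ((∑ i, B.mulVec x i * B.mulVec y i) / (X * Y)) ≤ 2 * c - 2 * (1/c) := by
    rw [← hdiff]; linarith [kp.2, km.1]
  have h2 : -(2 * c - 2 * (1/c)) ≤ 4 * ((∑ i, B.mulVec x i * B.mulVec y i) / (X * Y)) := by
    rw [← hdiff]; linarith [kp.1, km.2]
  rw [abs_le]
  have hXY : 0 < X * Y := mul_pos hXpos hYpos
  set S := ∑ i, B.mulVec x i * B.mulVec y i with hSdef
  have h4S : 4 * S = (4 * (S / (X * Y))) * (X * Y) := by field_simp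
  have hub := mul_le_mul_of_nonneg_right h1 hXY.le
  have hlb := mul_le_mul_of_nonneg_right h2 hXY.le
  have hid : (2 * c - 2 * (1/c)) * (X * Y) = 4 * ((c - 1/c)/2 * (X * Y)) := by ring
  have hid2 : -(2 * c - 2 * (1/c)) * (X * Y) = -(4 * ((c - 1/c)/2 * (X * Y))) := by ring
  constructor
  · linarith
  · linarith

set_option maxHeartbeats 2000000 in
/-- Auxiliary: shelling decomposition bound. -/
lemma shelling {n d s' s₂ : ℕ} (hs₂ : 0 < s₂) (h2s : 2 * s₂ ≤ s') (c : ℝ) (hc : 0 < c)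
    (B : Matrix (Fin n) (Fin d) ℝ)
    (hRIP : ∀ w : Fin d → ℝ, (Finset.univ.filter fun j => w j ≠ 0).card ≤ s' →
      (1 / c) * ∑ j, w j ^ 2 ≤ ∑ i, (B.mulVec w i) ^ 2 ∧
      ∑ i, (B.mulVec w i) ^ 2 ≤ c * ∑ j, w j ^ 2) :
    ∀ N : ℕ, ∀ u : Fin d → ℝ, (Finset.univ.filter fun j => u j ≠ 0).card ≤ N →
    ∃ a : ℝ, 0 ≤ a ∧
      (∀ h : ℝ, 0 ≤ h → (∀ j, |u j| ≤ h) →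
        a ≤ Real.sqrt s₂ * h + (∑ j, |u j|) / Real.sqrt s₂) ∧
      (a ≤ Real.sqrt (∑ j, u j ^ 2) + (∑ j, |u j|) / Real.sqrt s₂) ∧
      (∀ x : Fin d → ℝ, (Finset.univ.filter fun j => x j ≠ 0).card ≤ s₂ →
        (∀ j, x j = 0 ∨ u j = 0) →
        |∑ i, B.mulVec x i * B.mulVec u i| ≤
          (c - 1/c)/2 * (Real.sqrt (∑ j, x j ^ 2) * a)) ∧
      ((1/c + (c - 1/c)/2) * (∑ j, u j ^ 2) - (c - 1/c)/2 * a ^ 2 ≤ ∑ i, (B.mulVec u i) ^ 2) := by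
  have hs₂R : (0:ℝ) < (s₂ : ℝ) := by exact_mod_cast hs₂
  have hsqrt₂ : 0 < Real.sqrt s₂ := Real.sqrt_pos.2 hs₂R
  -- the base case, used whenever the support is small
  have base : ∀ u : Fin d → ℝ, (Finset.univ.filter fun j => u j ≠ 0).card ≤ s₂ →
      ∃ a : ℝ, 0 ≤ a ∧
      (∀ h : ℝ, 0 ≤ h → (∀ j, |u j| ≤ h) →
        a ≤ Real.sqrt s₂ * h + (∑ j, |u j|) / Real.sqrt s₂) ∧
      (a ≤ Real.sqrt (∑ j, u j ^ 2) + (∑ j, |u j|) / Real.sqrt s₂) ∧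
      (∀ x : Fin d → ℝ, (Finset.univ.filter fun j => x j ≠ 0).card ≤ s₂ →
        (∀ j, x j = 0 ∨ u j = 0) →
        |∑ i, B.mulVec x i * B.mulVec u i| ≤
          (c - 1/c)/2 * (Real.sqrt (∑ j, x j ^ 2) * a)) ∧
      ((1/c + (c - 1/c)/2) * (∑ j, u j ^ 2) - (c - 1/c)/2 * a ^ 2 ≤ ∑ i, (B.mulVec u i) ^ 2) := by
    intro u hu
    have husq : 0 ≤ ∑ j, u j ^ 2 := Finset.sum_nonneg fun j _ => sq_nonneg _
    have habsnn : 0 ≤ (∑ j, |u j|) := Finset.sum_nonneg fun j _ => abs_nonneg _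
    refine ⟨Real.sqrt (∑ j, u j ^ 2), Real.sqrt_nonneg _, ?_, ?_, ?_, ?_⟩
    · intro h hh hj
      have hsum : ∑ j, u j ^ 2 ≤ (s₂ : ℝ) * h ^ 2 := by
        have heq : ∑ j, u j ^ 2 = ∑ j ∈ Finset.univ.filter (fun j => u j ≠ 0), u j ^ 2 := by
          symm
          apply Finset.sum_filter_of_ne
          intro j _ hne hzero
          simp [hzero] at hne
        rw [heq]
        calc ∑ j ∈ Finset.univ.filter (fun j => u j ≠ 0), u j ^ 2
            ≤ ∑ _j ∈ Finset.univ.filter (fun j => u j ≠ 0), h ^ 2 := by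
              apply Finset.sum_le_sum
              intro j _
              have := abs_le.1 (hj j)
              nlinarith
          _ = ((Finset.univ.filter (fun j => u j ≠ 0)).card : ℝ) * h ^ 2 := by
              rw [Finset.sum_const, nsmul_eq_mul]
          _ ≤ (s₂ : ℝ) * h ^ 2 := by
              apply mul_le_mul_of_nonneg_right _ (sq_nonneg _)
              exact_mod_cast hu
      have : Real.sqrt (∑ j, u j ^ 2) ≤ Real.sqrt ((s₂:ℝ) * h ^ 2) := Real.sqrt_le_sqrt hsum
      rw [Real.sqrt_mul (le_of_lt hs₂R), Real.sqrt_sq hh] at this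
      have : (0:ℝ) ≤ (∑ j, |u j|) / Real.sqrt s₂ := by positivity
      linarith [Real.sqrt_le_sqrt hsum, (by rw [Real.sqrt_mul (le_of_lt hs₂R), Real.sqrt_sq hh] :
        Real.sqrt ((s₂:ℝ) * h ^ 2) = Real.sqrt s₂ * h)]
    · have : (0:ℝ) ≤ (∑ j, |u j|) / Real.sqrt s₂ := by positivity
      linarith
    · intro x hxcard hdisj
      exact rip_cross h2s c hc B hRIP x u hxcard hu hdisj
    · have := (hRIP u (le_trans hu (by omega))).1
      rw [Real.sq_sqrt husq]
      linarith
  intro N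
  induction N with
  | zero =>
    intro u hu
    exact base u (le_trans hu (Nat.zero_le _))
  | succ N ih =>
    intro u hu
    by_cases hsmallcase : (Finset.univ.filter fun j => u j ≠ 0).card ≤ s₂
    · exact base u hsmallcase
    push_neg at hsmallcase
    -- select the top s₂ coordinates
    have hs₂d : s₂ ≤ d := by
      have := Finset.card_filter_le (univ : Finset (Fin d)) (fun j => u j ≠ 0)
      simp only [Finset.card_univ, Fintype.card_fin] at this
      omega
    obtain ⟨T, hTcard, hTtop⟩ := top_select u s₂ hs₂d
    set x : Fin d → ℝ := fun j => if j ∈ T then u j else 0 with hxdef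
    set u' : Fin d → ℝ := fun j => if j ∈ T then 0 else u j with hu'def
    have hxu' : u = x + u' := by
      funext j; by_cases h : j ∈ T <;> simp [hxdef, hu'def, h]
    have hxcard : (Finset.univ.filter fun j => x j ≠ 0).card ≤ s₂ := by
      rw [← hTcard]
      apply Finset.card_le_card
      intro j hj
      simp only [Finset.mem_filter, Finset.mem_univ, true_and, hxdef] at hj
      by_contra h
      simp [h] at hj
    -- there is a support element inside T
    have hj₀ : ∃ j₀ ∈ T, u j₀ ≠ 0 := by
      by_contra hcon
      push_neg at hcon
      have hnotsub : ¬ (Finset.univ.filter fun j => u j ≠ 0) ⊆ T := by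
        intro hsub
        have := Finset.card_le_card hsub
        omega
      obtain ⟨k, hk, hknT⟩ := Finset.not_subset.1 hnotsub
      simp only [Finset.mem_filter, Finset.mem_univ, true_and] at hk
      obtain ⟨j, hjT⟩ := Finset.card_pos.1 (by omega : 0 < T.card)
      have := hTtop j hjT k hknT
      rw [hcon j hjT] at this
      simp only [abs_zero] at this
      exact hk (abs_eq_zero.1 (le_antisymm this (abs_nonneg _)))
    obtain ⟨j₀, hj₀T, hj₀ne⟩ := hj₀
    have hu'card : (Finset.univ.filter fun j => u' j ≠ 0).card ≤ N := by
      have hsub : (Finset.univ.filter fun j => u' j ≠ 0) ⊆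
          (Finset.univ.filter fun j => u j ≠ 0).erase j₀ := by
        intro j hj
        simp only [Finset.mem_filter, Finset.mem_univ, true_and, hu'def] at hj
        by_cases h : j ∈ T
        · simp [h] at hj
        · simp only [if_neg h] at hj
          refine Finset.mem_erase.2 ⟨?_, by simp [hj]⟩
          rintro rfl; exact h hj₀T
      have := Finset.card_le_card hsub
      rw [Finset.card_erase_of_mem (by simp [hj₀ne])] at this
      omega
    obtain ⟨a', ha'0, h1', h1b', h2', h3'⟩ := ih u' hu'card
    set X := Real.sqrt (∑ j, x j ^ 2) with hXdef
    have hXnn : 0 ≤ X := Real.sqrt_nonneg _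
    have hxsqnn : 0 ≤ ∑ j, x j ^ 2 := Finset.sum_nonneg fun j _ => sq_nonneg _
    have hX2 : X ^ 2 = ∑ j, x j ^ 2 := Real.sq_sqrt hxsqnn
    have hsumsq : ∑ j, u j ^ 2 = (∑ j, x j ^ 2) + (∑ j, u' j ^ 2) := by
      rw [← Finset.sum_add_distrib]
      apply Finset.sum_congr rfl
      intro j _
      by_cases h : j ∈ T <;> simp [hxdef, hu'def, h]
    have habs : ∑ j, |u j| = (∑ j, |x j|) + (∑ j, |u' j|) := by
      rw [← Finset.sum_add_distrib]
      apply Finset.sum_congr rfl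
      intro j _
      by_cases h : j ∈ T <;> simp [hxdef, hu'def, h]
    have hmv : ∀ i, B.mulVec u i = B.mulVec x i + B.mulVec u' i := by
      intro i; rw [hxu', Matrix.mulVec_add]; simp
    have hBsplit : ∑ i, (B.mulVec u i) ^ 2 =
        (∑ i, (B.mulVec x i) ^ 2) + 2 * (∑ i, B.mulVec x i * B.mulVec u' i)
          + (∑ i, (B.mulVec u' i) ^ 2) := by
      rw [Finset.mul_sum, ← Finset.sum_add_distrib, ← Finset.sum_add_distrib]
      apply Finset.sum_congr rfl
      intro i _
      rw [hmv i]; ring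
    have habsx : ∑ j, |x j| = ∑ j ∈ T, |u j| := by
      calc ∑ j, |x j| = ∑ j, if j ∈ T then |u j| else 0 :=
            Finset.sum_congr rfl (fun j _ => by by_cases h : j ∈ T <;> simp [hxdef, h])
        _ = ∑ j ∈ T, |u j| := by rw [Finset.sum_ite_mem, Finset.univ_inter]
    have hsumxsq : ∑ j, x j ^ 2 = ∑ j ∈ T, u j ^ 2 := by
      calc ∑ j, x j ^ 2 = ∑ j, if j ∈ T then u j ^ 2 else 0 :=
            Finset.sum_congr rfl (fun j _ => by by_cases h : j ∈ T <;> simp [hxdef, h])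
        _ = ∑ j ∈ T, u j ^ 2 := by rw [Finset.sum_ite_mem, Finset.univ_inter]
    have habsxnn : 0 ≤ ∑ j, |x j| := Finset.sum_nonneg fun j _ => abs_nonneg _
    -- tail coordinates are bounded by the average of the head
    have htail : ∀ j, |u' j| ≤ (∑ k, |x k|) / (s₂ : ℝ) := by
      intro j
      by_cases h : j ∈ T
      · simp only [hu'def, if_pos h, abs_zero]
        positivity
      · simp only [hu'def, if_neg h]
        have hsmul : T.card • |u j| ≤ ∑ i ∈ T, |u i| :=
          Finset.card_nsmul_le_sum T _ _ (fun i hi => hTtop i hi j h)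
        rw [hTcard, nsmul_eq_mul] at hsmul
        rw [le_div_iff₀ hs₂R, habsx]
        linarith
    -- the key algebraic identity for √s₂
    have hdivkey : Real.sqrt s₂ * ((∑ k, |x k|) / (s₂ : ℝ)) = (∑ k, |x k|) / Real.sqrt s₂ := by
      have hms : Real.sqrt s₂ * Real.sqrt s₂ = (s₂ : ℝ) := Real.mul_self_sqrt (le_of_lt hs₂R)
      field_simp
      nlinarith [hms]
    have ha'bound : a' ≤ (∑ k, |x k|) / Real.sqrt s₂ + (∑ j, |u' j|) / Real.sqrt s₂ := by
      have := h1' ((∑ k, |x k|) / (s₂ : ℝ)) (by positivity) htail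
      rw [hdivkey] at this
      linarith
    refine ⟨X + a', add_nonneg hXnn ha'0, ?_, ?_, ?_, ?_⟩
    · -- h1
      intro h hh hj
      have hXh : X ≤ Real.sqrt s₂ * h := by
        have hsum : ∑ j, x j ^ 2 ≤ (s₂ : ℝ) * h ^ 2 := by
          rw [hsumxsq]
          calc ∑ j ∈ T, u j ^ 2 ≤ ∑ _j ∈ T, h ^ 2 := by
                apply Finset.sum_le_sum
                intro j _
                have := abs_le.1 (hj j)
                nlinarith
            _ = (s₂ : ℝ) * h ^ 2 := by rw [Finset.sum_const, nsmul_eq_mul, hTcard]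
        calc X ≤ Real.sqrt ((s₂:ℝ) * h ^ 2) := Real.sqrt_le_sqrt hsum
          _ = Real.sqrt s₂ * h := by rw [Real.sqrt_mul (le_of_lt hs₂R), Real.sqrt_sq hh]
      rw [habs, add_div]
      linarith
    · -- h1b
      have hXV : X ≤ Real.sqrt (∑ j, u j ^ 2) := by
        apply Real.sqrt_le_sqrt
        have : 0 ≤ ∑ j, u' j ^ 2 := Finset.sum_nonneg fun j _ => sq_nonneg _
        rw [hsumsq]; linarith
      rw [habs, add_div]
      linarith
    · -- h2
      intro x₀ hx₀card hx₀disj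
      have hx₀x : ∀ j, x₀ j = 0 ∨ x j = 0 := by
        intro j
        rcases hx₀disj j with h | h
        · exact Or.inl h
        · right; by_cases hT : j ∈ T <;> simp [hxdef, hT, h]
      have hx₀u' : ∀ j, x₀ j = 0 ∨ u' j = 0 := by
        intro j
        rcases hx₀disj j with h | h
        · exact Or.inl h
        · right; by_cases hT : j ∈ T <;> simp [hu'def, hT, h]
      have hcross := rip_cross h2s c hc B hRIP x₀ x hx₀card hxcard hx₀x
      have hih2 := h2' x₀ hx₀card hx₀u'
      have hsplit : ∑ i, B.mulVec x₀ i * B.mulVec u i =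
          (∑ i, B.mulVec x₀ i * B.mulVec x i) + (∑ i, B.mulVec x₀ i * B.mulVec u' i) := by
        rw [← Finset.sum_add_distrib]
        apply Finset.sum_congr rfl
        intro i _
        rw [hmv i]; ring
      rw [hsplit]
      calc |(∑ i, B.mulVec x₀ i * B.mulVec x i) + (∑ i, B.mulVec x₀ i * B.mulVec u' i)|
          ≤ |∑ i, B.mulVec x₀ i * B.mulVec x i| + |∑ i, B.mulVec x₀ i * B.mulVec u' i| :=
            abs_add_le _ _
        _ ≤ (c - 1/c)/2 * (Real.sqrt (∑ j, x₀ j ^ 2) * X)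
            + (c - 1/c)/2 * (Real.sqrt (∑ j, x₀ j ^ 2) * a') := add_le_add hcross hih2
        _ = (c - 1/c)/2 * (Real.sqrt (∑ j, x₀ j ^ 2) * (X + a')) := by ring
    · -- h3
      have hRIPx := (hRIP x (le_trans hxcard (by omega))).1
      have hxu'disj : ∀ j, x j = 0 ∨ u' j = 0 := by
        intro j; by_cases h : j ∈ T
        · right; simp [hu'def, h]
        · left; simp [hxdef, h]
      have hQ := h2' x hxcard hxu'disj
      have hQlow : -((c - 1/c)/2 * (X * a')) ≤ ∑ i, B.mulVec x i * B.mulVec u' i := by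
        rw [hXdef]
        exact (abs_le.1 hQ).1
      have e1 : (c - 1/c)/2 * (X + a') ^ 2 = (c - 1/c)/2 * (∑ j, x j ^ 2)
          + (c - 1/c) * (X * a') + (c - 1/c)/2 * a' ^ 2 := by
        rw [← hX2]; ring
      have e2 : (1/c + (c - 1/c)/2) * (∑ j, u j ^ 2) =
          (1/c + (c - 1/c)/2) * (∑ j, x j ^ 2) + (1/c + (c - 1/c)/2) * (∑ j, u' j ^ 2) := by
        rw [hsumsq]; ring
      have e3 : (1/c + (c - 1/c)/2) * (∑ j, x j ^ 2) - (c - 1/c)/2 * (∑ j, x j ^ 2)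
          = 1/c * (∑ j, x j ^ 2) := by ring
      rw [hBsplit]
      linarith

set_option maxHeartbeats 2000000 in
/-- If `B` is `(s', c)`-RIP, `NS(v) ≤ σ`, and `√(σ/s')·c² ≤ 1/2`, then
`‖Bv‖₂ ≥ (1/c − c√(σ/s'))‖v‖₂`, and the right-hand side is at least `‖v‖₂/(2c)`. -/
theorem rip_numerically_sparse_lower {n d s' : ℕ} (hs' : 0 < s') (c σ : ℝ)
    (hc : 0 < c) (hσ : 0 ≤ σ) (B : Matrix (Fin n) (Fin d) ℝ)
    (hRIP : ∀ w : Fin d → ℝ, (Finset.univ.filter fun j => w j ≠ 0).card ≤ s' →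
      (1 / c) * ∑ j, w j ^ 2 ≤ ∑ i, (B.mulVec w i) ^ 2 ∧
      ∑ i, (B.mulVec w i) ^ 2 ≤ c * ∑ j, w j ^ 2)
    (v : Fin d → ℝ) (hNS : (∑ j, |v j|) ^ 2 ≤ σ * ∑ j, v j ^ 2)
    (hsmall : Real.sqrt (σ / s') * c ^ 2 ≤ 1 / 2) :
    (1 / c - c * Real.sqrt (σ / s')) * Real.sqrt (∑ j, v j ^ 2) ≤
        Real.sqrt (∑ i, (B.mulVec v i) ^ 2) ∧
    Real.sqrt (∑ j, v j ^ 2) / (2 * c) ≤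
        (1 / c - c * Real.sqrt (σ / s')) * Real.sqrt (∑ j, v j ^ 2) := by
  have hg : c * (1/c) = 1 := mul_one_div_cancel (ne_of_gt hc)
  set t := Real.sqrt (σ / s') with htdef
  have ht0 : 0 ≤ t := Real.sqrt_nonneg _
  have hts : t * c ^ 2 ≤ 1/2 := hsmall
  -- part 2 (works in all cases)
  have hg2 : c * (1/(2*c)) = 1/2 := by field_simp
  have h12 : 1/(2*c) ≤ 1/c - c*t := by nlinarith [hg, hg2, hc, hts]
  have part2 : Real.sqrt (∑ j, v j ^ 2) / (2 * c) ≤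
      (1 / c - c * t) * Real.sqrt (∑ j, v j ^ 2) := by
    have hVnn : 0 ≤ Real.sqrt (∑ j, v j ^ 2) := Real.sqrt_nonneg _
    calc Real.sqrt (∑ j, v j ^ 2) / (2 * c) = (1/(2*c)) * Real.sqrt (∑ j, v j ^ 2) := by ring
      _ ≤ (1 / c - c * t) * Real.sqrt (∑ j, v j ^ 2) :=
        mul_le_mul_of_nonneg_right h12 hVnn
  refine ⟨?_, part2⟩
  by_cases hV0 : ∑ j, v j ^ 2 = 0
  · rw [hV0, Real.sqrt_zero, mul_zero]
    exact Real.sqrt_nonneg _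
  -- main case
  have hVsum : 0 < ∑ j, v j ^ 2 :=
    lt_of_le_of_ne (Finset.sum_nonneg fun j _ => sq_nonneg _) (Ne.symm hV0)
  set V := Real.sqrt (∑ j, v j ^ 2) with hVdef
  have hVpos : 0 < V := Real.sqrt_pos.2 hVsum
  have hV2 : V ^ 2 = ∑ j, v j ^ 2 := Real.sq_sqrt (le_of_lt hVsum)
  -- c ≥ 1
  have hj₀ : ∃ j₀, v j₀ ≠ 0 := by
    by_contra hcon
    push_neg at hcon
    exact hV0 (Finset.sum_eq_zero fun j _ => by rw [hcon j]; ring)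
  obtain ⟨j₀, hj₀⟩ := hj₀
  have hc1 : 1 ≤ c := by
    set e : Fin d → ℝ := fun j => if j = j₀ then (1:ℝ) else 0 with hedef
    have hecard : (Finset.univ.filter fun j => e j ≠ 0).card ≤ s' := by
      have hsub : (Finset.univ.filter fun j => e j ≠ 0) ⊆ {j₀} := by
        intro j hj
        simp only [Finset.mem_filter, Finset.mem_univ, true_and, hedef] at hj
        by_contra h
        simp only [Finset.mem_singleton] at h
        simp [h] at hj
      calc _ ≤ ({j₀} : Finset (Fin d)).card := Finset.card_le_card hsub
        _ = 1 := Finset.card_singleton _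
        _ ≤ s' := hs'
    have he2 : ∑ j, e j ^ 2 = 1 := by
      simp [hedef, apply_ite (fun z : ℝ => z ^ 2)]
    have := hRIP e hecard
    rw [he2] at this
    nlinarith [this.1, this.2, hc]
  -- s' ≥ 2
  have hs'2 : 2 ≤ s' := by
    by_contra hcon
    have hs1 : s' = 1 := by omega
    have hl2l1 : ∑ j, v j ^ 2 ≤ (∑ j, |v j|) ^ 2 := by
      have := Finset.sum_sq_le_sq_sum_of_nonneg
        (f := fun j => |v j|) (s := (univ : Finset (Fin d))) (fun j _ => abs_nonneg _)
      simpa [sq_abs] using this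
    have hσ1 : 1 ≤ σ := by nlinarith
    have ht1 : 1 ≤ t := by
      rw [htdef, hs1]
      rw [show ((1:ℕ):ℝ) = 1 by norm_num, div_one]
      exact Real.one_le_sqrt.mpr hσ1
    nlinarith
  set s₂ := s' / 2 with hs₂def
  have hs₂pos : 0 < s₂ := by omega
  have h2s : 2 * s₂ ≤ s' := by omega
  have h3s : s' ≤ 3 * s₂ := by omega
  have hs₂R : (0:ℝ) < (s₂:ℝ) := by exact_mod_cast hs₂pos
  have hs'R : (0:ℝ) < (s':ℝ) := by exact_mod_cast hs'
  obtain ⟨a, ha0, -, h1b, -, h3⟩ := shelling hs₂pos h2s c hc B hRIP d v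
    (le_trans (Finset.card_filter_le _ _) (by simp))
  set L := ∑ j, |v j| with hLdef
  have hLnn : 0 ≤ L := Finset.sum_nonneg fun j _ => abs_nonneg _
  have hL : L ≤ Real.sqrt σ * V := by
    calc L = Real.sqrt (L ^ 2) := (Real.sqrt_sq hLnn).symm
      _ ≤ Real.sqrt (σ * ∑ j, v j ^ 2) := Real.sqrt_le_sqrt hNS
      _ = Real.sqrt σ * V := by rw [Real.sqrt_mul hσ]
  set t₃ := Real.sqrt (σ / s₂) with ht₃def
  have ht₃0 : 0 ≤ t₃ := Real.sqrt_nonneg _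
  have ht₃eq : t₃ = Real.sqrt σ / Real.sqrt s₂ := by rw [ht₃def, Real.sqrt_div hσ]
  have hsqs₂ : 0 < Real.sqrt s₂ := Real.sqrt_pos.2 hs₂R
  have ha : a ≤ (1 + t₃) * V := by
    have hdiv : L / Real.sqrt s₂ ≤ t₃ * V := by
      rw [ht₃eq]
      rw [div_le_iff₀ hsqs₂]
      calc L ≤ Real.sqrt σ * V := hL
        _ = Real.sqrt σ / Real.sqrt s₂ * V * Real.sqrt s₂ := by field_simp
    calc a ≤ V + L / Real.sqrt s₂ := h1b
      _ ≤ V + t₃ * V := by linarith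
      _ = (1 + t₃) * V := by ring
  have ht₃t : t₃ ≤ (7/4) * t := by
    have hdd : σ / s₂ ≤ (49/16) * (σ / s') := by
      rw [div_le_iff₀ hs₂R]
      rw [show (49:ℝ)/16 * (σ / s') * s₂ = (49/16) * σ * s₂ / s' by ring, le_div_iff₀ hs'R]
      have hcast : (s':ℝ) ≤ 3 * (s₂:ℝ) := by exact_mod_cast h3s
      nlinarith [mul_le_mul_of_nonneg_left hcast hσ, hs₂R, hσ]
    calc t₃ ≤ Real.sqrt ((49/16) * (σ / s')) := Real.sqrt_le_sqrt hdd
      _ = (7/4) * t := by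
        rw [Real.sqrt_mul (by norm_num : (0:ℝ) ≤ 49/16),
          show Real.sqrt ((49:ℝ)/16) = 7/4 by
            rw [show (49:ℝ)/16 = (7/4)^2 by norm_num, Real.sqrt_sq (by norm_num)]]
  -- the scalar inequality
  have hμ : 0 ≤ (c - 1/c)/2 := by nlinarith [hg]
  have hpoly : 32*(1 - c^2*t)^2 ≤ 32*c - 56*t*(c^3 - c) - 49*t^2*(c^3 - c) := by
    nlinarith [mul_nonneg ht0 (by linarith : (0:ℝ) ≤ 1 - 2*t*c^2),
      mul_nonneg (sub_nonneg.2 hc1) ht0, sq_nonneg (c-1), sq_nonneg t,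
      mul_nonneg (mul_nonneg ht0 ht0) (by linarith : (0:ℝ) ≤ 1 - 2*t*c^2),
      mul_nonneg (sub_nonneg.2 hc1) (mul_nonneg ht0 (by linarith : (0:ℝ) ≤ 1 - 2*t*c^2)),
      sq_nonneg (c*t), mul_pos (lt_of_lt_of_le one_pos hc1) (lt_of_lt_of_le one_pos hc1)]
  have hSC7 : (1/c - c*t)^2 ≤ 1/c + (c - 1/c)/2 - (c - 1/c)/2 * (1 + (7/4)*t)^2 := by
    have hc2 : (0:ℝ) < 32*c^2 := by positivity
    rw [← mul_le_mul_iff_of_pos_right hc2]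
    have e1 : (1/c - c*t)^2 * (32*c^2) = 32*(1 - c^2*t)^2 := by
      field_simp
    have e2 : (1/c + (c - 1/c)/2 - (c - 1/c)/2 * (1 + (7/4)*t)^2) * (32*c^2)
        = 32*c - 56*t*(c^3 - c) - 49*t^2*(c^3 - c) := by
      field_simp
      ring
    rw [e1, e2]
    exact hpoly
  have hSC : (1/c - c*t)^2 ≤ 1/c + (c - 1/c)/2 - (c - 1/c)/2 * (1 + t₃)^2 := by
    have hmono : (1 + t₃)^2 ≤ (1 + (7/4)*t)^2 :=
      pow_le_pow_left₀ (by linarith) (by linarith) 2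
    have h := mul_le_mul_of_nonneg_left hmono hμ
    linarith [hSC7, h]
  -- combine
  have hD : 0 ≤ 1/c - c*t := by nlinarith [hg, hg2, hc, hts]
  have ha2 : a^2 ≤ ((1 + t₃) * V)^2 := pow_le_pow_left₀ ha0 ha 2
  have hfinal : ((1/c - c*t) * V)^2 ≤ ∑ i, (B.mulVec v i) ^ 2 := by
    have hstep : (1/c + (c - 1/c)/2) * (∑ j, v j ^ 2) - (c - 1/c)/2 * ((1 + t₃) * V)^2
        ≤ ∑ i, (B.mulVec v i) ^ 2 := by
      have := mul_le_mul_of_nonneg_left ha2 hμ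
      linarith
    have hexp : ((1/c - c*t) * V)^2 = (1/c - c*t)^2 * V^2 := by ring
    have hrhs : (1/c + (c - 1/c)/2) * (∑ j, v j ^ 2) - (c - 1/c)/2 * ((1 + t₃) * V)^2
        = (1/c + (c - 1/c)/2 - (c - 1/c)/2 * (1 + t₃)^2) * V^2 := by
      rw [← hV2]; ring
    rw [hexp]
    rw [hrhs] at hstep
    calc (1/c - c*t)^2 * V^2 ≤ (1/c + (c - 1/c)/2 - (c - 1/c)/2 * (1 + t₃)^2) * V^2 :=
          mul_le_mul_of_nonneg_right hSC (sq_nonneg V)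
      _ ≤ ∑ i, (B.mulVec v i) ^ 2 := hstep
  calc (1/c - c*t) * V = Real.sqrt (((1/c - c*t) * V)^2) :=
        (Real.sqrt_sq (mul_nonneg hD hVpos.le)).symm
    _ ≤ Real.sqrt (∑ i, (B.mulVec v i) ^ 2) := Real.sqrt_le_sqrt hfinal
end
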